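/- Let m = (m(p))_{p≥0} be a sequence of positive reals, and k, p ∈ ℕ with 1 ≤ k < p. Given f̂(t,z) ∈ ℂ[[t,z]], a(z) ∈ ℂ[[z]] with a(0) ≠ 0, and initial data φ_0,…,φ_{k-1} ∈ ℂ[[z]], there exists a unique formal power series û(t,z) ∈ ℂ[[t,z]] satisfying (∂_{m_1,t}^k − a(z) ∂_{m_2,z}^p) û(t,z) = f̂(t,z) and ∂_{m_1,t}^j û(0,z) = φ_j(z) for j = 0,…,k-1, where m_1, m_2 are two sequences of positive reals. -/

import Mathlib

/-- Moment derivative in `t` on two-variable formal power series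
`u = Σ_{i,j} (u i j) t^i z^j`, acting on the `t`-index. -/
noncomputable def momentDt (m : ℕ → ℝ) (u : ℕ → ℕ → ℂ) : ℕ → ℕ → ℂ :=
  fun i j => ((m (i + 1) : ℝ) / (m i : ℝ) : ℂ) * u (i + 1) j

/-- Moment derivative in `z`, acting on the `z`-index. -/
noncomputable def momentDz (m : ℕ → ℝ) (u : ℕ → ℕ → ℂ) : ℕ → ℕ → ℂ :=
  fun i j => ((m (j + 1) : ℝ) / (m j : ℝ) : ℂ) * u i (j + 1)

/-- Multiplication by a one-variable series `a(z)` (Cauchy product in the `z`-index). -/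
noncomputable def mulZ (a : ℕ → ℂ) (u : ℕ → ℕ → ℂ) : ℕ → ℕ → ℂ :=
  fun i j => ∑ l ∈ Finset.range (j + 1), a l * u i (j - l)

lemma cancelC (m : ℕ → ℝ) (h : ∀ q, 0 < m q) (i j : ℕ) :
    ((m i / m j : ℝ) : ℂ) * ((m j / m i : ℝ) : ℂ) = 1 := by
  rw [← Complex.ofReal_mul]
  have hij : (m i / m j) * (m j / m i) = 1 := by
    rw [div_mul_div_comm, mul_comm (m j) (m i), div_self (mul_pos (h i) (h j)).ne']
  rw [hij, Complex.ofReal_one]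

lemma iterDt (m : ℕ → ℝ) (h : ∀ q, 0 < m q) (n : ℕ) (u : ℕ → ℕ → ℂ) (i j : ℕ) :
    ((momentDt m)^[n] u) i j = ((m (i + n) / m i : ℝ) : ℂ) * u (i + n) j := by
  induction n generalizing i with
  | zero => simp [div_self (h i).ne']
  | succ n ih =>
    rw [Function.iterate_succ_apply']
    simp only [momentDt]
    rw [ih (i + 1), show i + 1 + n = i + (n + 1) from by omega]
    have e0 : (m i : ℂ) ≠ 0 := Complex.ofReal_ne_zero.mpr (h i).ne'
    have e1 : (m (i + 1) : ℂ) ≠ 0 := Complex.ofReal_ne_zero.mpr (h (i + 1)).ne'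
    push_cast
    field_simp

lemma iterDz (m : ℕ → ℝ) (h : ∀ q, 0 < m q) (n : ℕ) (u : ℕ → ℕ → ℂ) (i j : ℕ) :
    ((momentDz m)^[n] u) i j = ((m (j + n) / m j : ℝ) : ℂ) * u i (j + n) := by
  induction n generalizing j with
  | zero => simp [div_self (h j).ne']
  | succ n ih =>
    rw [Function.iterate_succ_apply']
    simp only [momentDz]
    rw [ih (j + 1), show j + 1 + n = j + (n + 1) from by omega]
    have e0 : (m j : ℂ) ≠ 0 := Complex.ofReal_ne_zero.mpr (h j).ne'
    have e1 : (m (j + 1) : ℂ) ≠ 0 := Complex.ofReal_ne_zero.mpr (h (j + 1)).ne'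
    push_cast
    field_simp

/-- The formal solution, defined by recursion on the `t`-index (step `k`). -/
noncomputable def sol (m₁ m₂ : ℕ → ℝ) (a : ℕ → ℂ) (k p : ℕ) (hk : 1 ≤ k)
    (f φ : ℕ → ℕ → ℂ) : ℕ → ℕ → ℂ
  | i =>
    if h : i < k then fun n => ((m₁ 0 / m₁ i : ℝ) : ℂ) * φ i n
    else fun j => ((m₁ (i - k) / m₁ i : ℝ) : ℂ) *
      (f (i - k) j + ∑ l ∈ Finset.range (j + 1),
        a l * (((m₂ (j - l + p) / m₂ (j - l) : ℝ) : ℂ) *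
          sol m₁ m₂ a k p hk f φ (i - k) (j - l + p)))
  termination_by i => i
  decreasing_by exact Nat.sub_lt (by omega) (by omega)

lemma sol_lt (m₁ m₂ : ℕ → ℝ) (a : ℕ → ℂ) (k p : ℕ) (hk : 1 ≤ k)
    (f φ : ℕ → ℕ → ℂ) (i : ℕ) (h : i < k) (n : ℕ) :
    sol m₁ m₂ a k p hk f φ i n = ((m₁ 0 / m₁ i : ℝ) : ℂ) * φ i n := by
  rw [sol]
  simp [h]

lemma sol_ge (m₁ m₂ : ℕ → ℝ) (a : ℕ → ℂ) (k p : ℕ) (hk : 1 ≤ k)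
    (f φ : ℕ → ℕ → ℂ) (i j : ℕ) :
    sol m₁ m₂ a k p hk f φ (i + k) j = ((m₁ i / m₁ (i + k) : ℝ) : ℂ) *
      (f i j + ∑ l ∈ Finset.range (j + 1),
        a l * (((m₂ (j - l + p) / m₂ (j - l) : ℝ) : ℂ) *
          sol m₁ m₂ a k p hk f φ i (j - l + p))) := by
  rw [sol]
  have h : ¬ (i + k < k) := by omega
  simp [h]

theorem exists_unique_formal_solution_Cauchy
    (m₁ m₂ : ℕ → ℝ) (h₁ : ∀ p, 0 < m₁ p) (h₂ : ∀ p, 0 < m₂ p)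
    (a : ℕ → ℂ) (ha : a 0 ≠ 0)
    (k p : ℕ) (hk : 1 ≤ k) (hkp : k < p)
    (f : ℕ → ℕ → ℂ) (φ : ℕ → ℕ → ℂ) :
    ∃! u : ℕ → ℕ → ℂ,
      (∀ i j, ((momentDt m₁)^[k] u) i j - mulZ a ((momentDz m₂)^[p] u) i j = f i j) ∧
      (∀ j, j < k → ∀ n, ((momentDt m₁)^[j] u) 0 n = φ j n) := by
  have hL : ∀ (u : ℕ → ℕ → ℂ) (i j : ℕ),
      ((momentDt m₁)^[k] u) i j - mulZ a ((momentDz m₂)^[p] u) i j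
      = ((m₁ (i + k) / m₁ i : ℝ) : ℂ) * u (i + k) j -
        ∑ l ∈ Finset.range (j + 1),
          a l * (((m₂ (j - l + p) / m₂ (j - l) : ℝ) : ℂ) * u i (j - l + p)) := by
    intro u i j
    rw [iterDt m₁ h₁]
    simp only [mulZ]
    congr 1
    refine Finset.sum_congr rfl fun l hl => ?_
    rw [iterDz m₂ h₂]
  refine ⟨sol m₁ m₂ a k p hk f φ, ⟨?_, ?_⟩, ?_⟩
  · intro i j
    rw [hL, sol_ge, ← mul_assoc, cancelC m₁ h₁, one_mul]
    ring
  · intro j hj n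
    rw [iterDt m₁ h₁, Nat.zero_add, sol_lt _ _ _ _ _ _ _ _ _ hj, ← mul_assoc,
      cancelC m₁ h₁, one_mul]
  · intro v ⟨hveq, hvinit⟩
    have key : ∀ i n, v i n = sol m₁ m₂ a k p hk f φ i n := by
      intro i
      induction i using Nat.strong_induction_on with
      | _ i ih =>
        intro n
        by_cases h : i < k
        · have h0 := hvinit i h n
          rw [iterDt m₁ h₁, Nat.zero_add] at h0
          rw [sol_lt _ _ _ _ _ _ _ _ _ h, ← h0, ← mul_assoc, cancelC m₁ h₁, one_mul]
        · have hrep : ∀ l, v (i - k) l = sol m₁ m₂ a k p hk f φ (i - k) l :=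
            fun l => ih (i - k) (by omega) l
          have h0 := hveq (i - k) n
          rw [hL] at h0
          rw [show i - k + k = i from by omega] at h0
          simp only [hrep] at h0
          have h0' := sub_eq_iff_eq_add.mp h0
          rw [show i = i - k + k from by omega, sol_ge,
            show i - k + k = i from by omega]
          calc v i n = (((m₁ (i - k) / m₁ i : ℝ) : ℂ) * ((m₁ i / m₁ (i - k) : ℝ) : ℂ))
                * v i n := by rw [cancelC m₁ h₁, one_mul]
            _ = ((m₁ (i - k) / m₁ i : ℝ) : ℂ) * (((m₁ i / m₁ (i - k) : ℝ) : ℂ) * v i n) := by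
                ring
            _ = _ := by rw [h0']
    funext i n
    exact key i n
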